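/- arXiv:2503.14459 — 4 statements merged into one kernel-verified Lean document; each statement's English description precedes it below -/
import Mathlib

section
/- Doubly robust identification of the ATE functional: Let X : Ω → ℝ^d be measurable, T : Ω → ℝ measurable with values in {0,1}, Y : Ω → ℝ measurable, and set 𝒢 = σ(X). Let p be a version of E[T | 𝒢] and assume 0 < p < 1 almost surely. Let π, μ₁, μ₀ : ℝ^d → ℝ be measurable with 0 < π(X) < 1 almost surely, and assume that μ₁(X), μ₀(X), (Y − μ₁(X))·T/π(X), (Y − μ₀(X))·(1−T)/(1−π(X)), Y·T/π(X), Y·(1−T)/(1−π(X)), E[Y·T | 𝒢]/p, and E[Y·(1−T) | 𝒢]/(1−p) are all integrable. If either (i) π(X) = p almost surely, or (ii) E[(Y − μ₁(X))·T | 𝒢] = 0 and E[(Y − μ₀(X))·(1−T) | 𝒢] = 0 almost surely, then θ(π, μ₁, μ₀) = E[ E[Y·T | 𝒢]/E[T | 𝒢] − E[Y·(1−T) | 𝒢]/(1 − E[T | 𝒢]) ]. -/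
open MeasureTheory

lemma dr_side {Ω : Type*} {m mΩ : MeasurableSpace Ω} (hm : m ≤ mΩ)
    (P : Measure Ω) [IsProbabilityMeasure P]
    (Y S μf e : Ω → ℝ)
    (hY : Measurable Y) (hS : Measurable S) (hS01 : ∀ ω, S ω = 0 ∨ S ω = 1)
    (hμf : StronglyMeasurable[m] μf) (he : StronglyMeasurable[m] e)
    (he_pos : ∀ᵐ ω ∂P, 0 < e ω) (he_lt : ∀ᵐ ω ∂P, e ω < 1)
    (hq_pos : ∀ᵐ ω ∂P, 0 < (P[S | m]) ω)
    (h_int_μ : Integrable μf P)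
    (h_int_resid : Integrable (fun ω => (Y ω - μf ω) * S ω / e ω) P)
    (h_int_adj : Integrable (fun ω => (P[(fun ω' => Y ω' * S ω') | m]) ω / (P[S | m]) ω) P)
    (hdr : (e =ᵐ[P] P[S | m]) ∨
      (P[(fun ω => (Y ω - μf ω) * S ω) | m] =ᵐ[P] fun _ => 0)) :
    (∫ ω, μf ω ∂P) + ∫ ω, (Y ω - μf ω) * S ω / e ω ∂P
      = ∫ ω, (P[(fun ω' => Y ω' * S ω') | m]) ω / (P[S | m]) ω ∂P := by
  haveI : SigmaFinite (P.trim hm) := inferInstance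
  set q : Ω → ℝ := P[S | m] with hq_def
  -- basic integrabilities
  have hS_int : Integrable S P := by
    refine (integrable_const (1 : ℝ)).mono hS.aestronglyMeasurable ?_
    refine Filter.Eventually.of_forall fun ω => ?_
    rcases hS01 ω with h | h <;> simp [h]
  have hμS_int : Integrable (fun ω => μf ω * S ω) P := by
    refine h_int_μ.mono ((hμf.mono hm).aestronglyMeasurable.mul hS.aestronglyMeasurable) ?_
    refine Filter.Eventually.of_forall fun ω => ?_
    rcases hS01 ω with h | h <;> simp [h, abs_nonneg]
  have hresid_int : Integrable (fun ω => (Y ω - μf ω) * S ω) P := by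
    refine h_int_resid.mono ?_ ?_
    · exact ((hY.sub (hμf.mono hm).measurable).mul hS).aestronglyMeasurable
    · filter_upwards [he_pos, he_lt] with ω h0 h1
      have h0' : (0:ℝ) < e ω := h0
      rw [Real.norm_eq_abs, Real.norm_eq_abs, abs_div, abs_of_pos h0']
      rw [le_div_iff₀ h0']
      nlinarith [abs_nonneg ((Y ω - μf ω) * S ω)]
  have hYS_int : Integrable (fun ω => Y ω * S ω) P := by
    have : (fun ω => Y ω * S ω) = fun ω => (Y ω - μf ω) * S ω + μf ω * S ω := by
      funext ω; ring
    rw [this]; exact hresid_int.add hμS_int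
  -- pull-out: E[μf·S|m] = μf·q
  have key1 : P[(fun ω => μf ω * S ω) | m] =ᵐ[P] fun ω => μf ω * q ω := by
    have := condExp_mul_of_stronglyMeasurable_left (μ := P) hμf
      (g := S) (by exact hμS_int) hS_int
    exact this
  -- E[(Y-μf)S|m] = E[YS|m] - μf·q
  have hsplit : P[(fun ω => (Y ω - μf ω) * S ω) | m]
      =ᵐ[P] fun ω => (P[(fun ω' => Y ω' * S ω') | m]) ω - μf ω * q ω := by
    have h1 : (fun ω => (Y ω - μf ω) * S ω)
        = (fun ω => Y ω * S ω) - (fun ω => μf ω * S ω) := by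
      funext ω; simp [Pi.sub_apply]; ring
    rw [h1]
    refine (condExp_sub hYS_int hμS_int m).trans ?_
    filter_upwards [key1] with ω h
    simp [Pi.sub_apply, h]
  rcases hdr with heq | hzero
  · -- case (i): e = q a.e.
    have hqinv : StronglyMeasurable[m] (fun ω => (q ω)⁻¹) :=
      (stronglyMeasurable_condExp.measurable.inv).stronglyMeasurable
    have step1 : (fun ω => (Y ω - μf ω) * S ω / e ω)
        =ᵐ[P] fun ω => (q ω)⁻¹ * ((Y ω - μf ω) * S ω) := by
      filter_upwards [heq] with ω h
      rw [div_eq_mul_inv, mul_comm, h]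
    have hint1 : Integrable (fun ω => (q ω)⁻¹ * ((Y ω - μf ω) * S ω)) P :=
      h_int_resid.congr step1
    have pull : P[(fun ω => (q ω)⁻¹ * ((Y ω - μf ω) * S ω)) | m]
        =ᵐ[P] fun ω => (q ω)⁻¹ * (P[(fun ω' => (Y ω' - μf ω') * S ω') | m]) ω := by
      exact condExp_mul_of_stronglyMeasurable_left hqinv (by exact hint1) hresid_int
    have e1 : ∫ ω, (Y ω - μf ω) * S ω / e ω ∂P
        = ∫ ω, (q ω)⁻¹ * ((Y ω - μf ω) * S ω) ∂P := integral_congr_ae step1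
    have e2 : ∫ ω, (q ω)⁻¹ * ((Y ω - μf ω) * S ω) ∂P
        = ∫ ω, (P[(fun ω => (q ω)⁻¹ * ((Y ω - μf ω) * S ω)) | m]) ω ∂P :=
      (integral_condExp hm).symm
    have e3 : ∫ ω, (P[(fun ω => (q ω)⁻¹ * ((Y ω - μf ω) * S ω)) | m]) ω ∂P
        = ∫ ω, ((P[(fun ω' => Y ω' * S ω') | m]) ω / q ω - μf ω) ∂P := by
      refine integral_congr_ae ?_
      filter_upwards [pull, hsplit, hq_pos] with ω h1 h2 h3
      rw [h1, h2]
      field_simp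
    have e4 : ∫ ω, ((P[(fun ω' => Y ω' * S ω') | m]) ω / q ω - μf ω) ∂P
        = (∫ ω, (P[(fun ω' => Y ω' * S ω') | m]) ω / q ω ∂P) - ∫ ω, μf ω ∂P :=
      integral_sub h_int_adj h_int_μ
    rw [e1, e2, e3, e4]; ring
  · -- case (ii): residual condexps vanish
    have heinv : StronglyMeasurable[m] (fun ω => (e ω)⁻¹) :=
      (he.measurable.inv).stronglyMeasurable
    have step1 : (fun ω => (Y ω - μf ω) * S ω / e ω)
        = fun ω => (e ω)⁻¹ * ((Y ω - μf ω) * S ω) := by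
      funext ω; rw [div_eq_mul_inv, mul_comm]
    have hint1 : Integrable (fun ω => (e ω)⁻¹ * ((Y ω - μf ω) * S ω)) P := by
      rw [← step1]; exact h_int_resid
    have pull : P[(fun ω => (e ω)⁻¹ * ((Y ω - μf ω) * S ω)) | m]
        =ᵐ[P] fun ω => (e ω)⁻¹ * (P[(fun ω' => (Y ω' - μf ω') * S ω') | m]) ω :=
      condExp_mul_of_stronglyMeasurable_left heinv (by exact hint1) hresid_int
    have e1 : ∫ ω, (Y ω - μf ω) * S ω / e ω ∂P = 0 := by
      rw [step1, ← integral_condExp hm (f := fun ω => (e ω)⁻¹ * ((Y ω - μf ω) * S ω))]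
      have : P[(fun ω => (e ω)⁻¹ * ((Y ω - μf ω) * S ω)) | m] =ᵐ[P] fun _ => (0:ℝ) := by
        filter_upwards [pull, hzero] with ω h1 h2
        rw [h1, h2]; ring
      rw [integral_congr_ae this, integral_zero]
    have e2 : ∫ ω, (P[(fun ω' => Y ω' * S ω') | m]) ω / q ω ∂P = ∫ ω, μf ω ∂P := by
      refine integral_congr_ae ?_
      filter_upwards [hsplit, hzero, hq_pos] with ω h1 h2 h3
      have : (P[(fun ω' => Y ω' * S ω') | m]) ω = μf ω * q ω := by
        have := h1.symm.trans h2
        simpa using by linarith [this]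
      rw [this]
      field_simp
    rw [e1, e2]; ring
/-- **Doubly robust identification of the ATE functional.**
The AIPW functional `θ(π, μ₁, μ₀)` equals the adjusted treatment-effect functional
`E[ E[Y·T | σ(X)]/E[T | σ(X)] − E[Y·(1−T) | σ(X)]/(1 − E[T | σ(X)]) ]` whenever either
the propensity nuisance `π` is a correct version of `E[T | σ(X)]`, or both outcome
residuals have vanishing conditional mean given `σ(X)`. -/
theorem doubly_robust_ate
    {Ω : Type*} [MeasurableSpace Ω] (P : Measure Ω) [IsProbabilityMeasure P]
    {d : ℕ} (X : Ω → (Fin d → ℝ)) (T Y : Ω → ℝ)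
    (hX : Measurable X) (hT : Measurable T) (hY : Measurable Y)
    (hT01 : ∀ ω, T ω = 0 ∨ T ω = 1)
    (p : Ω → ℝ)
    (hp : p =ᵐ[P] P[T | MeasurableSpace.comap X inferInstance])
    (hp_pos : ∀ᵐ ω ∂P, 0 < p ω) (hp_lt : ∀ᵐ ω ∂P, p ω < 1)
    (π μ₁ μ₀ : (Fin d → ℝ) → ℝ)
    (hπ : Measurable π) (hμ₁ : Measurable μ₁) (hμ₀ : Measurable μ₀)
    (hπ_pos : ∀ᵐ ω ∂P, 0 < π (X ω)) (hπ_lt : ∀ᵐ ω ∂P, π (X ω) < 1)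
    (h_int_μ₁ : Integrable (fun ω => μ₁ (X ω)) P)
    (h_int_μ₀ : Integrable (fun ω => μ₀ (X ω)) P)
    (h_int_resid₁ : Integrable (fun ω => (Y ω - μ₁ (X ω)) * T ω / π (X ω)) P)
    (h_int_resid₀ : Integrable (fun ω => (Y ω - μ₀ (X ω)) * (1 - T ω) / (1 - π (X ω))) P)
    (h_int_ipw₁ : Integrable (fun ω => Y ω * T ω / π (X ω)) P)
    (h_int_ipw₀ : Integrable (fun ω => Y ω * (1 - T ω) / (1 - π (X ω))) P)
    (h_int_adj₁ : Integrable
      (fun ω => (P[(fun ω' => Y ω' * T ω') | MeasurableSpace.comap X inferInstance]) ω / p ω) P)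
    (h_int_adj₀ : Integrable
      (fun ω => (P[(fun ω' => Y ω' * (1 - T ω')) | MeasurableSpace.comap X inferInstance]) ω
        / (1 - p ω)) P)
    (hdr : (∀ᵐ ω ∂P, π (X ω) = p ω) ∨
      ((P[(fun ω => (Y ω - μ₁ (X ω)) * T ω) | MeasurableSpace.comap X inferInstance]
          =ᵐ[P] fun _ => 0) ∧
       (P[(fun ω => (Y ω - μ₀ (X ω)) * (1 - T ω)) | MeasurableSpace.comap X inferInstance]
          =ᵐ[P] fun _ => 0))) :
    ∫ ω, (μ₁ (X ω) - μ₀ (X ω) + (Y ω - μ₁ (X ω)) * T ω / π (X ω)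
        - (Y ω - μ₀ (X ω)) * (1 - T ω) / (1 - π (X ω))) ∂P =
      ∫ ω, ((P[(fun ω' => Y ω' * T ω') | MeasurableSpace.comap X inferInstance]) ω / p ω
        - (P[(fun ω' => Y ω' * (1 - T ω')) | MeasurableSpace.comap X inferInstance]) ω
          / (1 - p ω)) ∂P := by

  have hm : MeasurableSpace.comap X inferInstance ≤ ‹MeasurableSpace Ω› := hX.comap_le
  set m : MeasurableSpace Ω := MeasurableSpace.comap X inferInstance with hm_def
  haveI : SigmaFinite (P.trim hm) := inferInstance
  have hXm : Measurable[m] X := measurable_iff_comap_le.mpr le_rfl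
  -- conditional expectations
  set q : Ω → ℝ := P[T | m] with hq_def
  have hpq : p =ᵐ[P] q := hp
  have hq_pos : ∀ᵐ ω ∂P, 0 < q ω := by
    filter_upwards [hp_pos, hpq] with ω h1 h2; rwa [h2] at h1
  have hT_int : Integrable T P := by
    refine (integrable_const (1 : ℝ)).mono hT.aestronglyMeasurable ?_
    refine Filter.Eventually.of_forall fun ω => ?_
    rcases hT01 ω with h | h <;> simp [h]
  have hq2 : P[(fun ω => 1 - T ω) | m] =ᵐ[P] fun ω => 1 - q ω := by
    have h1 : (fun ω : Ω => 1 - T ω) = (fun _ : Ω => (1:ℝ)) - T := by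
      funext ω; simp
    rw [h1]
    refine (condExp_sub (integrable_const 1) hT_int m).trans ?_
    have hc := condExp_const (μ := P) hm (1:ℝ)
    refine Filter.Eventually.of_forall fun ω => ?_
    simp [Pi.sub_apply, hc, hq_def]
  have hq2_pos : ∀ᵐ ω ∂P, 0 < (P[(fun ω => 1 - T ω) | m]) ω := by
    filter_upwards [hp_lt, hpq, hq2] with ω h1 h2 h3
    rw [h3, ← h2]; linarith
  -- side 1 via dr_side
  have side1 := dr_side hm P Y T (fun x => μ₁ (X x)) (fun x => π (X x))
    hY hT hT01 ((hμ₁.comp hXm).stronglyMeasurable) ((hπ.comp hXm).stronglyMeasurable)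
    hπ_pos hπ_lt hq_pos h_int_μ₁ h_int_resid₁
    (h_int_adj₁.congr (by filter_upwards [hpq] with ω h; rw [h]))
    (by
      rcases hdr with h | ⟨h, _⟩
      · exact Or.inl (by filter_upwards [h, hpq] with ω h1 h2; rw [h1, h2])
      · exact Or.inr h)
  -- side 0 via dr_side
  have side0 := dr_side hm P Y (fun ω => 1 - T ω) (fun x => μ₀ (X x)) (fun x => 1 - π (X x))
    hY (measurable_const.sub hT)
    (fun ω => by rcases hT01 ω with h | h <;> simp [h])
    ((hμ₀.comp hXm).stronglyMeasurable)
    ((measurable_const.sub (hπ.comp hXm)).stronglyMeasurable)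
    (by filter_upwards [hπ_lt] with ω h; linarith)
    (by filter_upwards [hπ_pos] with ω h; linarith)
    hq2_pos h_int_μ₀ h_int_resid₀
    (h_int_adj₀.congr (by
      filter_upwards [hpq, hq2] with ω h1 h2
      rw [h2, ← h1]))
    (by
      rcases hdr with h | ⟨_, h⟩
      · refine Or.inl ?_
        filter_upwards [h, hpq, hq2] with ω h1 h2 h3
        rw [h3, ← h2, h1]
      · exact Or.inr h)
  -- integrabilities for splitting
  have hadj1 : Integrable (fun ω => (P[(fun ω' => Y ω' * T ω') | m]) ω / q ω) P :=
    h_int_adj₁.congr (by filter_upwards [hpq] with ω h; rw [h])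
  have hadj0 : Integrable
      (fun ω => (P[(fun ω' => Y ω' * (1 - T ω')) | m]) ω / (P[(fun ω => 1 - T ω) | m]) ω) P :=
    h_int_adj₀.congr (by filter_upwards [hpq, hq2] with ω h1 h2; rw [h2, ← h1])
  -- split LHS
  have lhs_split : ∫ ω, (μ₁ (X ω) - μ₀ (X ω) + (Y ω - μ₁ (X ω)) * T ω / π (X ω)
        - (Y ω - μ₀ (X ω)) * (1 - T ω) / (1 - π (X ω))) ∂P
      = ((∫ ω, μ₁ (X ω) ∂P) + ∫ ω, (Y ω - μ₁ (X ω)) * T ω / π (X ω) ∂P)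
        - ((∫ ω, μ₀ (X ω) ∂P) + ∫ ω, (Y ω - μ₀ (X ω)) * (1 - T ω) / (1 - π (X ω)) ∂P) := by
    have h1 : (fun ω => μ₁ (X ω) - μ₀ (X ω) + (Y ω - μ₁ (X ω)) * T ω / π (X ω)
        - (Y ω - μ₀ (X ω)) * (1 - T ω) / (1 - π (X ω)))
        = fun ω => (μ₁ (X ω) + (Y ω - μ₁ (X ω)) * T ω / π (X ω))
          - (μ₀ (X ω) + (Y ω - μ₀ (X ω)) * (1 - T ω) / (1 - π (X ω))) := by
      funext ω; ring
    have i1 : Integrable (fun ω => μ₁ (X ω) + (Y ω - μ₁ (X ω)) * T ω / π (X ω)) P :=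
      h_int_μ₁.add h_int_resid₁
    have i0 : Integrable
        (fun ω => μ₀ (X ω) + (Y ω - μ₀ (X ω)) * (1 - T ω) / (1 - π (X ω))) P :=
      h_int_μ₀.add h_int_resid₀
    rw [h1, integral_sub i1 i0, integral_add h_int_μ₁ h_int_resid₁,
      integral_add h_int_μ₀ h_int_resid₀]
  -- split RHS
  have rhs_split : ∫ ω, ((P[(fun ω' => Y ω' * T ω') | m]) ω / p ω
        - (P[(fun ω' => Y ω' * (1 - T ω')) | m]) ω / (1 - p ω)) ∂P
      = (∫ ω, (P[(fun ω' => Y ω' * T ω') | m]) ω / q ω ∂P)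
        - ∫ ω, (P[(fun ω' => Y ω' * (1 - T ω')) | m]) ω
            / (P[(fun ω => 1 - T ω) | m]) ω ∂P := by
    rw [integral_sub h_int_adj₁ h_int_adj₀]
    congr 1
    · exact integral_congr_ae (by filter_upwards [hpq] with ω h; rw [h])
    · exact integral_congr_ae (by filter_upwards [hpq, hq2] with ω h1 h2; rw [h2, ← h1])
  rw [lhs_split, rhs_split, side1, side0]
end

section
/- T-invariance reduction of the AIPW functional: Let X : Ω → ℝ^d be measurable, T : Ω → ℝ measurable with values in {0,1}, Y : Ω → ℝ measurable, and set 𝒢 = σ(X). Let π : ℝ^d → ℝ be measurable such that π(X) is a version of E[T | 𝒢] and 0 < π(X) < 1 almost surely. Let μ₁, μ₀ : ℝ^d → ℝ be any measurable functions such that μ₁(X), μ₀(X), (Y − μ₁(X))·T/π(X), (Y − μ₀(X))·(1−T)/(1−π(X)), T·μ₁(X)/π(X), and (1−T)·μ₀(X)/(1−π(X)) are integrable. Then θ(π, μ₁, μ₀) = E[ T·Y/π(X) ] − E[ (1−T)·Y/(1−π(X)) ]. -/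
open MeasureTheory

lemma aipw_aux_integral_mul_condexp {Ω : Type*} {mΩ : MeasurableSpace Ω} {P : Measure Ω}
    [IsFiniteMeasure P] {m : MeasurableSpace Ω} (hm : m ≤ mΩ) {f g : Ω → ℝ}
    (hf : StronglyMeasurable[m] f) (hg : Integrable g P) (hfg : Integrable (f * g) P) :
    ∫ ω, f ω * g ω ∂P = ∫ ω, f ω * (P[g|m]) ω ∂P := by
  haveI : SigmaFinite (P.trim hm) := inferInstance
  have h1 : ∫ ω, f ω * g ω ∂P = ∫ ω, (P[f * g|m]) ω ∂P := (integral_condExp hm).symm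
  rw [h1]
  exact integral_congr_ae (condExp_mul_of_stronglyMeasurable_left hf hfg hg)

/-- **T-invariance reduction of the AIPW functional.**
If the propensity function `π(X)` is a correct version of `E[T | σ(X)]`, then the AIPW
functional reduces to the inverse-propensity-weighted functional, regardless of the
outcome nuisances `μ₁, μ₀`. -/
theorem aipw_T_invariance_reduction
    {Ω : Type*} [MeasurableSpace Ω] (P : Measure Ω) [IsProbabilityMeasure P]
    {d : ℕ} (X : Ω → (Fin d → ℝ)) (T Y : Ω → ℝ)
    (hX : Measurable X) (hT : Measurable T) (hY : Measurable Y)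
    (hT01 : ∀ ω, T ω = 0 ∨ T ω = 1)
    (π μ₁ μ₀ : (Fin d → ℝ) → ℝ)
    (hπ : Measurable π) (hμ₁ : Measurable μ₁) (hμ₀ : Measurable μ₀)
    (hπ_ver : (fun ω => π (X ω)) =ᵐ[P] P[T | MeasurableSpace.comap X inferInstance])
    (hπ_pos : ∀ᵐ ω ∂P, 0 < π (X ω)) (hπ_lt : ∀ᵐ ω ∂P, π (X ω) < 1)
    (h_int_μ₁ : Integrable (fun ω => μ₁ (X ω)) P)
    (h_int_μ₀ : Integrable (fun ω => μ₀ (X ω)) P)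
    (h_int_resid₁ : Integrable (fun ω => (Y ω - μ₁ (X ω)) * T ω / π (X ω)) P)
    (h_int_resid₀ : Integrable (fun ω => (Y ω - μ₀ (X ω)) * (1 - T ω) / (1 - π (X ω))) P)
    (h_int_w₁ : Integrable (fun ω => T ω * μ₁ (X ω) / π (X ω)) P)
    (h_int_w₀ : Integrable (fun ω => (1 - T ω) * μ₀ (X ω) / (1 - π (X ω))) P) :
    ∫ ω, (μ₁ (X ω) - μ₀ (X ω) + (Y ω - μ₁ (X ω)) * T ω / π (X ω)
        - (Y ω - μ₀ (X ω)) * (1 - T ω) / (1 - π (X ω))) ∂P =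
      (∫ ω, T ω * Y ω / π (X ω) ∂P) - ∫ ω, (1 - T ω) * Y ω / (1 - π (X ω)) ∂P := by
  let m : MeasurableSpace Ω := MeasurableSpace.comap X inferInstance
  have hm : m ≤ _ := hX.comap_le
  have hXm : Measurable[m] X := measurable_iff_comap_le.mpr le_rfl
  -- T is integrable (bounded)
  have hT_int : Integrable T P := by
    refine (integrable_const (1 : ℝ)).mono' hT.aestronglyMeasurable ?_
    filter_upwards with ω
    rcases hT01 ω with h | h <;> simp [h]
  -- key identity for arm 1: ∫ T * μ₁(X) / π(X) = ∫ μ₁(X)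
  have key₁ : ∫ ω, T ω * μ₁ (X ω) / π (X ω) ∂P = ∫ ω, μ₁ (X ω) ∂P := by
    have hf : StronglyMeasurable[m] (fun ω => μ₁ (X ω) / π (X ω)) :=
      ((hμ₁.comp hXm).div (hπ.comp hXm)).stronglyMeasurable
    have hfg : Integrable ((fun ω => μ₁ (X ω) / π (X ω)) * T) P := by
      refine h_int_w₁.congr (Filter.Eventually.of_forall fun ω => ?_)
      simp only [Pi.mul_apply]; ring
    have h1 : ∫ ω, T ω * μ₁ (X ω) / π (X ω) ∂P
        = ∫ ω, (μ₁ (X ω) / π (X ω)) * T ω ∂P := by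
      apply integral_congr_ae; filter_upwards with ω; ring
    rw [h1, aipw_aux_integral_mul_condexp hm hf hT_int hfg]
    apply integral_congr_ae
    filter_upwards [hπ_ver, hπ_pos] with ω hv hp
    rw [← hv]
    field_simp
  -- conditional expectation of 1 - T
  have hcond : (fun ω => 1 - π (X ω)) =ᵐ[P] P[(fun ω => 1 - T ω)|m] := by
    have h1 : P[(fun ω => (1 : ℝ) - T ω)|m]
        =ᵐ[P] fun ω => (P[(fun _ => (1:ℝ))|m]) ω - (P[T|m]) ω :=
      condExp_sub (integrable_const 1) hT_int m
    have h2 : P[(fun _ => (1:ℝ))|m] = fun _ => (1:ℝ) := condExp_const hm 1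
    filter_upwards [h1, hπ_ver] with ω hω hv
    rw [hω, h2, ← hv]
  have key₀ : ∫ ω, (1 - T ω) * μ₀ (X ω) / (1 - π (X ω)) ∂P = ∫ ω, μ₀ (X ω) ∂P := by
    have hf : StronglyMeasurable[m] (fun ω => μ₀ (X ω) / (1 - π (X ω))) :=
      ((hμ₀.comp hXm).div ((measurable_const.sub (hπ.comp hXm)))).stronglyMeasurable
    have hg : Integrable (fun ω => 1 - T ω) P := (integrable_const 1).sub hT_int
    have hfg : Integrable ((fun ω => μ₀ (X ω) / (1 - π (X ω))) * (fun ω => 1 - T ω)) P := by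
      refine h_int_w₀.congr (Filter.Eventually.of_forall fun ω => ?_)
      simp only [Pi.mul_apply]; ring
    have h1 : ∫ ω, (1 - T ω) * μ₀ (X ω) / (1 - π (X ω)) ∂P
        = ∫ ω, (μ₀ (X ω) / (1 - π (X ω))) * (1 - T ω) ∂P := by
      apply integral_congr_ae; filter_upwards with ω; ring
    rw [h1, aipw_aux_integral_mul_condexp hm hf hg hfg]
    apply integral_congr_ae
    filter_upwards [hcond, hπ_lt] with ω hv hp
    rw [← hv]
    have : 1 - π (X ω) ≠ 0 := by linarith
    field_simp
  -- integrability of TY/π and (1-T)Y/(1-π)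
  have h_int_ipw₁ : Integrable (fun ω => T ω * Y ω / π (X ω)) P := by
    refine (h_int_resid₁.add h_int_w₁).congr (Filter.Eventually.of_forall fun ω => ?_)
    simp only [Pi.add_apply]; ring
  have h_int_ipw₀ : Integrable (fun ω => (1 - T ω) * Y ω / (1 - π (X ω))) P := by
    refine (h_int_resid₀.add h_int_w₀).congr (Filter.Eventually.of_forall fun ω => ?_)
    simp only [Pi.add_apply]; ring
  -- decompose the residual integrals
  have hres₁ : ∫ ω, (Y ω - μ₁ (X ω)) * T ω / π (X ω) ∂P
      = (∫ ω, T ω * Y ω / π (X ω) ∂P) - ∫ ω, T ω * μ₁ (X ω) / π (X ω) ∂P := by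
    rw [← integral_sub h_int_ipw₁ h_int_w₁]
    apply integral_congr_ae; filter_upwards with ω; ring
  have hres₀ : ∫ ω, (Y ω - μ₀ (X ω)) * (1 - T ω) / (1 - π (X ω)) ∂P
      = (∫ ω, (1 - T ω) * Y ω / (1 - π (X ω)) ∂P)
        - ∫ ω, (1 - T ω) * μ₀ (X ω) / (1 - π (X ω)) ∂P := by
    rw [← integral_sub h_int_ipw₀ h_int_w₀]
    apply integral_congr_ae; filter_upwards with ω; ring
  have hsplit : ∫ ω, (μ₁ (X ω) - μ₀ (X ω) + (Y ω - μ₁ (X ω)) * T ω / π (X ω)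
      - (Y ω - μ₀ (X ω)) * (1 - T ω) / (1 - π (X ω))) ∂P
      = (∫ ω, μ₁ (X ω) ∂P) - (∫ ω, μ₀ (X ω) ∂P)
        + (∫ ω, (Y ω - μ₁ (X ω)) * T ω / π (X ω) ∂P)
        - ∫ ω, (Y ω - μ₀ (X ω)) * (1 - T ω) / (1 - π (X ω)) ∂P := by
    have i1 : Integrable (fun ω => μ₁ (X ω) - μ₀ (X ω)) P := h_int_μ₁.sub h_int_μ₀
    have i2 : Integrable (fun ω => μ₁ (X ω) - μ₀ (X ω)
        + (Y ω - μ₁ (X ω)) * T ω / π (X ω)) P := i1.add h_int_resid₁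
    rw [integral_sub i2 h_int_resid₀, integral_add i1 h_int_resid₁,
      integral_sub h_int_μ₁ h_int_μ₀]
  rw [hsplit, hres₁, hres₀, key₁, key₀]
  ring
end

section
/- Y-invariance reduction of the AIPW functional: Let X : Ω → ℝ^d be measurable, T : Ω → ℝ measurable with values in {0,1}, Y : Ω → ℝ measurable, and set 𝒢 = σ(X). Let μ₁, μ₀ : ℝ^d → ℝ be measurable functions such that E[(Y − μ₁(X))·T | 𝒢] = 0 and E[(Y − μ₀(X))·(1−T) | 𝒢] = 0 almost surely. Let π : ℝ^d → ℝ be any measurable function with 0 < π(X) < 1 almost surely, and assume μ₁(X), μ₀(X), (Y − μ₁(X))·T, (Y − μ₀(X))·(1−T), (Y − μ₁(X))·T/π(X), and (Y − μ₀(X))·(1−T)/(1−π(X)) are integrable. Then θ(π, μ₁, μ₀) = E[ μ₁(X) − μ₀(X) ]. -/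
open MeasureTheory

/-- If a residual `r` has vanishing conditional mean given `σ(X)`, then multiplying it by
any measurable function of `X` keeps mean zero. -/
lemma aipw_aux_integral_zero
    {Ω : Type*} [MeasurableSpace Ω] (P : Measure Ω) [IsProbabilityMeasure P]
    {d : ℕ} (X : Ω → (Fin d → ℝ)) (hX : Measurable X)
    (g : (Fin d → ℝ) → ℝ) (hg : Measurable g) (r : Ω → ℝ)
    (hr : Integrable r P)
    (hcond : P[r | MeasurableSpace.comap X inferInstance] =ᵐ[P] fun _ => 0)
    (hint : Integrable (fun ω => g (X ω) * r ω) P) :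
    ∫ ω, g (X ω) * r ω ∂P = 0 := by
  have hm : MeasurableSpace.comap X inferInstance ≤ (inferInstance : MeasurableSpace Ω) :=
    hX.comap_le
  set m := MeasurableSpace.comap X inferInstance
  have hgm : StronglyMeasurable[m] (fun ω => g (X ω)) :=
    (hg.comp (comap_measurable X)).stronglyMeasurable
  have hmul : P[(fun ω => g (X ω)) * r | m] =ᵐ[P] (fun ω => g (X ω)) * P[r | m] :=
    condExp_mul_of_stronglyMeasurable_left hgm hint hr
  have hzero : P[(fun ω => g (X ω)) * r | m] =ᵐ[P] fun _ => (0 : ℝ) := by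
    refine hmul.trans ?_
    filter_upwards [hcond] with ω hω
    simp [Pi.mul_apply, hω]
  have h1 : ∫ ω, (P[(fun ω => g (X ω)) * r | m]) ω ∂P = ∫ ω, g (X ω) * r ω ∂P :=
    integral_condExp hm
  rw [← h1, integral_congr_ae hzero, integral_zero]

/-- **Y-invariance reduction of the AIPW functional.**
If the outcome functions `μ₁, μ₀` are correct versions of the conditional outcome means,
i.e. both residuals `(Y − μ₁(X))·T` and `(Y − μ₀(X))·(1−T)` have vanishing conditional
mean given `σ(X)`, then the AIPW functional reduces to the plug-in outcome functional
`E[μ₁(X) − μ₀(X)]`, regardless of the propensity nuisance `π`. -/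
theorem aipw_Y_invariance_reduction
    {Ω : Type*} [MeasurableSpace Ω] (P : Measure Ω) [IsProbabilityMeasure P]
    {d : ℕ} (X : Ω → (Fin d → ℝ)) (T Y : Ω → ℝ)
    (hX : Measurable X) (hT : Measurable T) (hY : Measurable Y)
    (hT01 : ∀ ω, T ω = 0 ∨ T ω = 1)
    (μ₁ μ₀ π : (Fin d → ℝ) → ℝ)
    (hμ₁ : Measurable μ₁) (hμ₀ : Measurable μ₀) (hπ : Measurable π)
    (hres₁ : P[(fun ω => (Y ω - μ₁ (X ω)) * T ω) | MeasurableSpace.comap X inferInstance]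
      =ᵐ[P] fun _ => 0)
    (hres₀ : P[(fun ω => (Y ω - μ₀ (X ω)) * (1 - T ω)) | MeasurableSpace.comap X inferInstance]
      =ᵐ[P] fun _ => 0)
    (hπ_pos : ∀ᵐ ω ∂P, 0 < π (X ω)) (hπ_lt : ∀ᵐ ω ∂P, π (X ω) < 1)
    (h_int_μ₁ : Integrable (fun ω => μ₁ (X ω)) P)
    (h_int_μ₀ : Integrable (fun ω => μ₀ (X ω)) P)
    (h_int_r₁ : Integrable (fun ω => (Y ω - μ₁ (X ω)) * T ω) P)
    (h_int_r₀ : Integrable (fun ω => (Y ω - μ₀ (X ω)) * (1 - T ω)) P)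
    (h_int_resid₁ : Integrable (fun ω => (Y ω - μ₁ (X ω)) * T ω / π (X ω)) P)
    (h_int_resid₀ : Integrable (fun ω => (Y ω - μ₀ (X ω)) * (1 - T ω) / (1 - π (X ω))) P) :
    ∫ ω, (μ₁ (X ω) - μ₀ (X ω) + (Y ω - μ₁ (X ω)) * T ω / π (X ω)
        - (Y ω - μ₀ (X ω)) * (1 - T ω) / (1 - π (X ω))) ∂P =
      ∫ ω, (μ₁ (X ω) - μ₀ (X ω)) ∂P := by
  have hz₁ : ∫ ω, (Y ω - μ₁ (X ω)) * T ω / π (X ω) ∂P = 0 := by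
    have heq : ∫ ω, (Y ω - μ₁ (X ω)) * T ω / π (X ω) ∂P
        = ∫ ω, (fun x => (π x)⁻¹) (X ω) * ((Y ω - μ₁ (X ω)) * T ω) ∂P :=
      integral_congr_ae (Filter.Eventually.of_forall fun ω => by
        simp [div_eq_mul_inv, mul_comm])
    rw [heq]
    refine aipw_aux_integral_zero P X hX (fun x => (π x)⁻¹) hπ.inv _ h_int_r₁ hres₁ ?_
    have : (fun ω => (fun x => (π x)⁻¹) (X ω) * ((Y ω - μ₁ (X ω)) * T ω))
        = fun ω => (Y ω - μ₁ (X ω)) * T ω / π (X ω) :=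
      funext fun ω => by simp [div_eq_mul_inv, mul_comm]
    rw [this]; exact h_int_resid₁
  have hz₀ : ∫ ω, (Y ω - μ₀ (X ω)) * (1 - T ω) / (1 - π (X ω)) ∂P = 0 := by
    have heq : ∫ ω, (Y ω - μ₀ (X ω)) * (1 - T ω) / (1 - π (X ω)) ∂P
        = ∫ ω, (fun x => (1 - π x)⁻¹) (X ω) * ((Y ω - μ₀ (X ω)) * (1 - T ω)) ∂P :=
      integral_congr_ae (Filter.Eventually.of_forall fun ω => by
        simp [div_eq_mul_inv, mul_comm])
    rw [heq]
    refine aipw_aux_integral_zero P X hX (fun x => (1 - π x)⁻¹) (measurable_const.sub hπ).inv _ h_int_r₀ hres₀ ?_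
    have : (fun ω => (fun x => (1 - π x)⁻¹) (X ω) * ((Y ω - μ₀ (X ω)) * (1 - T ω)))
        = fun ω => (Y ω - μ₀ (X ω)) * (1 - T ω) / (1 - π (X ω)) :=
      funext fun ω => by simp [div_eq_mul_inv, mul_comm]
    rw [this]; exact h_int_resid₀
  have h1 : Integrable (fun ω => μ₁ (X ω) - μ₀ (X ω)) P := h_int_μ₁.sub h_int_μ₀
  have h2 : Integrable
      (fun ω => μ₁ (X ω) - μ₀ (X ω) + (Y ω - μ₁ (X ω)) * T ω / π (X ω)) P :=
    h1.add h_int_resid₁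
  rw [integral_sub h2 h_int_resid₀, integral_add h1 h_int_resid₁, hz₁, hz₀]
  ring
end

section
/- Zero-temperature limit of the Gumbel-softmax gate: Let L : Ω → ℝ be a random variable whose law has cumulative distribution function x ↦ 1/(1 + exp(−x)) (the standard logistic distribution), and let w ∈ ℝ. Then the limit as τ → 0⁺ of E[ 1/(1 + exp(−(w + L)/τ)) ] exists and equals 1/(1 + exp(−w)). -/
open MeasureTheory Filter

private lemma sig_pos {c : ℝ} (hc : 0 < c) :
    Tendsto (fun τ : ℝ => 1 / (1 + Real.exp (-c / τ))) (nhdsWithin 0 (Set.Ioi 0)) (nhds 1) := by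
  have h2 : Tendsto (fun τ : ℝ => τ⁻¹) (nhdsWithin 0 (Set.Ioi 0)) atTop :=
    tendsto_inv_nhdsGT_zero
  have h1 : Tendsto (fun τ : ℝ => -c / τ) (nhdsWithin 0 (Set.Ioi 0)) atBot := by
    have := Tendsto.const_mul_atTop_of_neg (by linarith : -c < 0) h2
    simpa [div_eq_mul_inv] using this
  have h3 : Tendsto (fun τ : ℝ => Real.exp (-c / τ)) (nhdsWithin 0 (Set.Ioi 0)) (nhds 0) :=
    Real.tendsto_exp_atBot.comp h1
  have h4 : Tendsto (fun τ : ℝ => 1 / (1 + Real.exp (-c / τ))) (nhdsWithin 0 (Set.Ioi 0))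
      (nhds (1 / (1 + 0))) := by
    apply Tendsto.div tendsto_const_nhds (tendsto_const_nhds.add h3)
    norm_num
  simpa using h4

private lemma sig_neg {c : ℝ} (hc : c < 0) :
    Tendsto (fun τ : ℝ => 1 / (1 + Real.exp (-c / τ))) (nhdsWithin 0 (Set.Ioi 0)) (nhds 0) := by
  have h2 : Tendsto (fun τ : ℝ => τ⁻¹) (nhdsWithin 0 (Set.Ioi 0)) atTop :=
    tendsto_inv_nhdsGT_zero
  have h1 : Tendsto (fun τ : ℝ => -c / τ) (nhdsWithin 0 (Set.Ioi 0)) atTop := by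
    have := Tendsto.const_mul_atTop (neg_pos.mpr hc) h2
    simpa [div_eq_mul_inv] using this
  have h3 : Tendsto (fun τ : ℝ => Real.exp (-c / τ)) (nhdsWithin 0 (Set.Ioi 0)) atTop :=
    Real.tendsto_exp_atTop.comp h1
  have h4 : Tendsto (fun τ : ℝ => (1 + Real.exp (-c / τ))) (nhdsWithin 0 (Set.Ioi 0)) atTop :=
    tendsto_atTop_add_const_left _ 1 h3
  simpa [one_div, Pi.inv_def] using h4.inv_tendsto_atTop

/-- **Zero-temperature limit of the Gumbel-softmax gate.**
If `L` is standard logistic (CDF equal to the sigmoid) and `w ∈ ℝ`, then as the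
temperature `τ → 0⁺`, the expected relaxed gate `E[sigmoid((w + L)/τ)]` converges to the
Bernoulli success probability `sigmoid(w)`. -/
theorem gumbel_softmax_zero_temperature_limit
    {Ω : Type*} [MeasurableSpace Ω] (P : Measure Ω) [IsProbabilityMeasure P]
    (L : Ω → ℝ) (hL : Measurable L)
    (h_cdf : ∀ x : ℝ, P {ω | L ω ≤ x} = ENNReal.ofReal (1 / (1 + Real.exp (-x))))
    (w : ℝ) :
    Tendsto (fun τ : ℝ => ∫ ω, 1 / (1 + Real.exp (-(w + L ω) / τ)) ∂P)
      (nhdsWithin 0 (Set.Ioi 0)) (nhds (1 / (1 + Real.exp (-w)))) := by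
  set g : ℝ → ℝ := fun x => 1 / (1 + Real.exp (-x)) with hg_def
  have hgpos : ∀ x, 0 < g x := fun x => by positivity
  have hg1 : ∀ x, g x ≤ 1 := by
    intro x
    rw [hg_def, div_le_one (by positivity)]
    nlinarith [Real.exp_pos (-x)]
  have hgcont : Continuous g := by
    apply Continuous.div continuous_const
    · exact continuous_const.add (Real.continuous_exp.comp continuous_neg)
    · intro x; positivity
  -- no atom at -w
  have hatom : P {ω | L ω = -w} = 0 := by
    have hub : ∀ ε ∈ Set.Ioi (0:ℝ),
        (P {ω | L ω = -w}).toReal ≤ g (-w) - g (-w - ε) := by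
      intro ε hε
      have hsub : {ω | L ω = -w} ∪ {ω | L ω ≤ -w - ε} ⊆ {ω | L ω ≤ -w} := by
        rintro ω (h | h)
        · exact le_of_eq h
        · simp only [Set.mem_setOf_eq] at h ⊢
          simp only [Set.mem_Ioi] at hε
          linarith
      have hdisj : Disjoint {ω | L ω = -w} {ω | L ω ≤ -w - ε} := by
        rw [Set.disjoint_left]
        rintro ω h1 h2
        simp only [Set.mem_setOf_eq] at h1 h2
        rw [h1] at h2
        simp at hε; linarith
      have hmeas : MeasurableSet {ω | L ω ≤ -w - ε} := hL measurableSet_Iic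
      have hle : P {ω | L ω = -w} + P {ω | L ω ≤ -w - ε} ≤ P {ω | L ω ≤ -w} := by
        rw [← measure_union hdisj hmeas]; exact measure_mono hsub
      rw [h_cdf, h_cdf] at hle
      have h1 : (P {ω | L ω = -w} + ENNReal.ofReal (1 / (1 + Real.exp (-(-w - ε))))).toReal
          ≤ (ENNReal.ofReal (1 / (1 + Real.exp (-(-w))))).toReal :=
        ENNReal.toReal_le_toReal (by finiteness) (by finiteness) |>.mpr hle
      rw [ENNReal.toReal_add (by finiteness) (by finiteness),
        ENNReal.toReal_ofReal (le_of_lt (hgpos _)),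
        ENNReal.toReal_ofReal (le_of_lt (hgpos _))] at h1
      simp only [hg_def]
      linarith
    have htd : Tendsto (fun ε : ℝ => g (-w) - g (-w - ε)) (nhdsWithin 0 (Set.Ioi 0))
        (nhds 0) := by
      have : Tendsto (fun ε : ℝ => g (-w) - g (-w - ε)) (nhds 0) (nhds (g (-w) - g (-w - 0))) := by
        apply Tendsto.sub tendsto_const_nhds
        exact (hgcont.tendsto _).comp (tendsto_const_nhds.sub tendsto_id)
      simpa using this.mono_left nhdsWithin_le_nhds
    have hle0 : (P {ω | L ω = -w}).toReal ≤ 0 :=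
      ge_of_tendsto htd (eventually_nhdsWithin_of_forall hub)
    have : (P {ω | L ω = -w}).toReal = 0 := le_antisymm hle0 ENNReal.toReal_nonneg
    rw [ENNReal.toReal_eq_zero_iff] at this
    rcases this with h | h
    · exact h
    · exact absurd h (measure_ne_top _ _)
  -- the limit function
  set f : Ω → ℝ := fun ω => if -w < L ω then 1 else 0 with hf_def
  have hmeasS : MeasurableSet {ω | -w < L ω} := hL measurableSet_Ioi
  -- dominated convergence
  have hDCT : Tendsto (fun τ : ℝ => ∫ ω, 1 / (1 + Real.exp (-(w + L ω) / τ)) ∂P)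
      (nhdsWithin 0 (Set.Ioi 0)) (nhds (∫ ω, f ω ∂P)) := by
    apply tendsto_integral_filter_of_dominated_convergence (fun _ => (1:ℝ))
    · filter_upwards with τ
      apply Measurable.aestronglyMeasurable
      apply Measurable.div measurable_const
      exact measurable_const.add ((Real.measurable_exp).comp (by fun_prop))
    · filter_upwards with τ
      filter_upwards with ω
      rw [Real.norm_eq_abs, abs_of_pos (by positivity), div_le_one (by positivity)]
      nlinarith [Real.exp_pos (-(w + L ω) / τ)]
    · exact integrable_const 1
    · have hcompl : ∀ᵐ ω ∂P, L ω ≠ -w := by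
        rw [ae_iff]
        simpa using hatom
      filter_upwards [hcompl] with ω hω
      rcases lt_or_gt_of_ne hω with h | h
      · -- L ω < -w, c := w + L ω < 0, limit 0
        have hc : w + L ω < 0 := by linarith
        have := sig_neg hc
        simp only [hf_def]
        rw [if_neg (by linarith)]
        exact this
      · have hc : 0 < w + L ω := by linarith
        have := sig_pos hc
        simp only [hf_def]
        rw [if_pos (by linarith)]
        exact this
  -- compute the limit integral
  have hint : ∫ ω, f ω ∂P = 1 / (1 + Real.exp (-w)) := by
    have hfi : f = Set.indicator {ω | -w < L ω} (fun _ => (1:ℝ)) := by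
      ext ω
      by_cases h : -w < L ω <;> simp [hf_def, Set.indicator, h]
    have h1 : ∫ ω, f ω ∂P = (P {ω | -w < L ω}).toReal := by
      rw [hfi, integral_indicator_const _ hmeasS]
      simp
      rfl
    have h2 : P {ω | -w < L ω} = 1 - ENNReal.ofReal (1 / (1 + Real.exp w)) := by
      have hc : {ω | -w < L ω} = {ω | L ω ≤ -w}ᶜ := by
        ext ω; simp [not_le]
      have hm : MeasurableSet {ω | L ω ≤ -w} := hL measurableSet_Iic
      rw [hc, measure_compl hm (measure_ne_top _ _), measure_univ, h_cdf]
      norm_num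
    rw [h1, h2, ENNReal.toReal_sub_of_le (ENNReal.ofReal_le_one.mpr ?hle) (by finiteness)]
    · rw [ENNReal.toReal_ofReal (by positivity), ENNReal.toReal_one]
      rw [Real.exp_neg]
      have h3 := Real.exp_pos w
      field_simp
      ring
    case hle =>
      rw [div_le_one (by positivity)]
      nlinarith [Real.exp_pos w]
  rwa [hint] at hDCT
end
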